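/- arXiv:1001.0492 — 2 statements merged into one kernel-verified Lean document; each statement's English description precedes it below -/
import Mathlib

section
/- Let A and B be real symmetric n×n matrices with decreasingly ordered eigenvalues l₁ ≥ ⋯ ≥ l_n. Then Σ_{i=1}^n |l_i(A) − l_i(B)|² ≤ ‖A − B‖_F². -/
open Matrix Finset

lemma ds_bound {n : ℕ} (a b : Fin n → ℝ) (ha : Antitone a) (hb : Antitone b)
    (S : Matrix (Fin n) (Fin n) ℝ) (hS : S ∈ doublyStochastic ℝ (Fin n)) :
    ∑ i, ∑ j, a i * b j * S i j ≤ ∑ i, a i * b i := by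
  obtain ⟨w, hw0, hw1, hwS⟩ := exists_eq_sum_perm_of_mem_doublyStochastic hS
  have key : ∀ σ : Equiv.Perm (Fin n), ∑ i, a i * b (σ i) ≤ ∑ i, a i * b i :=
    fun σ => (ha.monovary hb).sum_mul_comp_perm_le_sum_mul
  have hSij : ∀ i j, S i j = ∑ σ : Equiv.Perm (Fin n), w σ * (if σ i = j then (1:ℝ) else 0) := by
    intro i j
    rw [← hwS]
    simp [Matrix.sum_apply, PEquiv.toMatrix_apply, Equiv.toPEquiv_apply]
  calc ∑ i, ∑ j, a i * b j * S i j
      = ∑ σ : Equiv.Perm (Fin n), w σ * ∑ i, a i * b (σ i) := by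
        simp only [hSij, Finset.mul_sum]
        have h1 : ∀ i, ∑ j, ∑ σ : Equiv.Perm (Fin n),
            a i * b j * (w σ * (if σ i = j then (1:ℝ) else 0))
            = ∑ σ : Equiv.Perm (Fin n), w σ * (a i * b (σ i)) := by
          intro i
          rw [Finset.sum_comm]
          refine Finset.sum_congr rfl fun σ _ => ?_
          simp [mul_ite]
          ring
        simp only [h1]
        rw [Finset.sum_comm, ← Finset.sum_congr rfl fun σ _ => (Finset.mul_sum _ _ _)]
    _ ≤ ∑ σ : Equiv.Perm (Fin n), w σ * ∑ i, a i * b i := by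
        exact Finset.sum_le_sum fun σ _ => mul_le_mul_of_nonneg_left (key σ) (hw0 σ)
    _ = ∑ i, a i * b i := by rw [← Finset.sum_mul, hw1, one_mul]

variable {n : ℕ}

lemma sq_entries_doublyStochastic (W : Matrix (Fin n) (Fin n) ℝ)
    (hW : W ∈ Matrix.unitaryGroup (Fin n) ℝ) :
    Matrix.of (fun i j => (W i j)^2) ∈ doublyStochastic ℝ (Fin n) := by
  rw [mem_doublyStochastic_iff_sum]
  refine ⟨fun i j => sq_nonneg _, fun i => ?_, fun j => ?_⟩
  · have h := congrFun (congrFun (Matrix.mem_unitaryGroup_iff.mp hW) i) i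
    simpa [Matrix.mul_apply, Matrix.one_apply, conjTranspose_apply, sq] using h
  · have h := congrFun (congrFun (Matrix.mem_unitaryGroup_iff'.mp hW) j) j
    simpa [Matrix.mul_apply, Matrix.one_apply, conjTranspose_apply, sq, mul_comm] using h

variable {n : ℕ}

lemma trace_mul_eq (A B : Matrix (Fin n) (Fin n) ℝ)
    (hA : A.IsHermitian) (hB : B.IsHermitian) :
    ∃ W ∈ Matrix.unitaryGroup (Fin n) ℝ,
      (A * B).trace = ∑ i, ∑ j, hA.eigenvalues i * hB.eigenvalues j * (W i j)^2 := by
  set U : Matrix (Fin n) (Fin n) ℝ := (hA.eigenvectorUnitary : Matrix (Fin n) (Fin n) ℝ) with hUdef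
  set V : Matrix (Fin n) (Fin n) ℝ := (hB.eigenvectorUnitary : Matrix (Fin n) (Fin n) ℝ) with hVdef
  have hU : U ∈ Matrix.unitaryGroup (Fin n) ℝ := hA.eigenvectorUnitary.2
  have hV : V ∈ Matrix.unitaryGroup (Fin n) ℝ := hB.eigenvectorUnitary.2
  have hUU : U * star U = 1 := Matrix.mem_unitaryGroup_iff.mp hU
  have hUU' : star U * U = 1 := Matrix.mem_unitaryGroup_iff'.mp hU
  have hVV : V * star V = 1 := Matrix.mem_unitaryGroup_iff.mp hV
  set W : Matrix (Fin n) (Fin n) ℝ := star U * V with hWdef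
  have hWmem : W ∈ Matrix.unitaryGroup (Fin n) ℝ := by
    rw [Matrix.mem_unitaryGroup_iff]
    rw [show star W = star V * U by simp [hWdef]]
    rw [hWdef, mul_assoc, ← mul_assoc V, hVV, one_mul, hUU']
  refine ⟨W, hWmem, ?_⟩
  have hDA : star U * A * U = diagonal hA.eigenvalues := by
    have := hA.conjStarAlgAut_star_eigenvectorUnitary
    simpa [RCLike.ofReal_real_eq_id] using this
  have hBspec : B = V * diagonal hB.eigenvalues * star V := by
    have := hB.spectral_theorem
    simpa [RCLike.ofReal_real_eq_id] using this
  have key : star U * (A * B) * U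
      = diagonal hA.eigenvalues * (W * diagonal hB.eigenvalues * star W) := by
    rw [← hDA, hWdef, show star (star U * V) = star V * U by simp]
    nth_rewrite 1 [hBspec]
    have h : (star U * A * U) * ((star U * V) * diagonal hB.eigenvalues * (star V * U))
        = star U * (A * ((U * star U) * (V * diagonal hB.eigenvalues * star V))) * U := by
      noncomm_ring
    rw [h, hUU, one_mul]
  have htr : (A * B).trace = (star U * (A * B) * U).trace := by
    rw [trace_mul_cycle, ← mul_assoc, hUU, one_mul]
  rw [htr, key]
  have : (diagonal hA.eigenvalues * (W * diagonal hB.eigenvalues * star W)).trace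
      = ∑ i, hA.eigenvalues i * ∑ j, hB.eigenvalues j * (W i j)^2 := by
    rw [Matrix.trace]
    refine Finset.sum_congr rfl fun i _ => ?_
    rw [Matrix.diag, Matrix.diagonal_mul]
    congr 1
    rw [Matrix.mul_apply]
    refine Finset.sum_congr rfl fun j _ => ?_
    rw [Matrix.mul_diagonal, Matrix.star_eq_conjTranspose, Matrix.conjTranspose_apply]
    simp [sq]; ring
  rw [this]
  refine Finset.sum_congr rfl fun i _ => ?_
  rw [Finset.mul_sum]
  exact Finset.sum_congr rfl fun j _ => by ring

lemma ds_reindex {n : ℕ} (S : Matrix (Fin n) (Fin n) ℝ) (hS : S ∈ doublyStochastic ℝ (Fin n))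
    (σ τ : Equiv.Perm (Fin n)) :
    Matrix.of (fun i j => S (σ i) (τ j)) ∈ doublyStochastic ℝ (Fin n) := by
  rw [mem_doublyStochastic_iff_sum] at hS ⊢
  refine ⟨fun i j => hS.1 _ _, fun i => ?_, fun j => ?_⟩
  · simp only [Matrix.of_apply]
    rw [Equiv.sum_comp τ (fun j => S (σ i) j)]
    exact hS.2.1 _
  · simp only [Matrix.of_apply]
    rw [Equiv.sum_comp σ (fun i => S i (τ j))]
    exact hS.2.2 _

lemma trace_sq {n : ℕ} (A : Matrix (Fin n) (Fin n) ℝ) (hA : A.IsHermitian) :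
    (A * A).trace = ∑ i, hA.eigenvalues i ^ 2 := by
  set U : Matrix (Fin n) (Fin n) ℝ := (hA.eigenvectorUnitary : Matrix (Fin n) (Fin n) ℝ) with hUdef
  have hU : U ∈ Matrix.unitaryGroup (Fin n) ℝ := hA.eigenvectorUnitary.2
  have hUU : U * star U = 1 := Matrix.mem_unitaryGroup_iff.mp hU
  have hDA : star U * A * U = diagonal hA.eigenvalues := by
    have := hA.conjStarAlgAut_star_eigenvectorUnitary
    simpa [RCLike.ofReal_real_eq_id] using this
  have htr : (A * A).trace = (star U * (A * A) * U).trace := by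
    rw [trace_mul_cycle, ← mul_assoc, hUU, one_mul]
  have key : star U * (A * A) * U = diagonal hA.eigenvalues * diagonal hA.eigenvalues := by
    rw [← hDA]
    have h : (star U * A * U) * (star U * A * U)
        = star U * (A * (U * star U) * A) * U := by noncomm_ring
    rw [h, hUU, mul_one]
  rw [htr, key, diagonal_mul_diagonal, trace_diagonal]
  exact Finset.sum_congr rfl fun i _ => (sq _).symm

lemma trace_mul_entries {n : ℕ} (A B : Matrix (Fin n) (Fin n) ℝ) (hB : B.IsHermitian) :
    (A * B).trace = ∑ i, ∑ j, A i j * B i j := by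
  rw [Matrix.trace]
  refine Finset.sum_congr rfl fun i _ => ?_
  rw [Matrix.diag, Matrix.mul_apply]
  refine Finset.sum_congr rfl fun j _ => ?_
  congr 1
  have := hB.apply j i
  simpa using this.symm

/-- For real symmetric matrices `A`, `B` with decreasingly ordered eigenvalue sequences
`a` and `b`, we have `∑ i, |a i - b i|² ≤ ‖A - B‖_F²` (Lidskii). -/
theorem stmt6 {n : ℕ} (A B : Matrix (Fin n) (Fin n) ℝ)
    (hA : A.IsHermitian) (hB : B.IsHermitian)
    (a b : Fin n → ℝ)
    (σa : Equiv.Perm (Fin n)) (ha : a = hA.eigenvalues ∘ σa) (ha' : Antitone a)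
    (σb : Equiv.Perm (Fin n)) (hb : b = hB.eigenvalues ∘ σb) (hb' : Antitone b) :
    ∑ i, |a i - b i| ^ 2 ≤ ∑ i, ∑ j, (A i j - B i j) ^ 2 := by
  obtain ⟨W, hWmem, hTr⟩ := trace_mul_eq A B hA hB
  have hS := ds_reindex _ (sq_entries_doublyStochastic W hWmem) σa σb
  have hmain : (A * B).trace ≤ ∑ i, a i * b i := by
    have h1 : ∑ i, ∑ j, a i * b j * ((W (σa i) (σb j)) ^ 2) = (A * B).trace := by
      rw [hTr, ← Equiv.sum_comp σa
        (fun i => ∑ j, hA.eigenvalues i * hB.eigenvalues j * (W i j) ^ 2)]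
      refine Finset.sum_congr rfl fun i _ => ?_
      rw [← Equiv.sum_comp σb
        (fun j => hA.eigenvalues (σa i) * hB.eigenvalues j * (W (σa i) j) ^ 2)]
      exact Finset.sum_congr rfl fun j _ => by rw [ha, hb]; rfl
    calc (A * B).trace
        = ∑ i, ∑ j, a i * b j * (Matrix.of (fun i j =>
            (Matrix.of fun i j => (W i j) ^ 2) (σa i) (σb j)) i j) := by rw [← h1]; rfl
      _ ≤ ∑ i, a i * b i := ds_bound a b ha' hb' _ hS
  have eA : ∑ i, (a i) ^ 2 = ∑ i, hA.eigenvalues i ^ 2 := by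
    rw [ha]; exact Equiv.sum_comp σa (fun i => hA.eigenvalues i ^ 2)
  have eB : ∑ i, (b i) ^ 2 = ∑ i, hB.eigenvalues i ^ 2 := by
    rw [hb]; exact Equiv.sum_comp σb (fun i => hB.eigenvalues i ^ 2)
  have tAA := trace_sq A hA
  have tBB := trace_sq B hB
  have tABe := trace_mul_entries A B hB
  have tAAe := trace_mul_entries A A hA
  have tBBe := trace_mul_entries B B hB
  have expandR : ∑ i, ∑ j, (A i j - B i j) ^ 2
      = (∑ i, ∑ j, A i j * A i j) + (∑ i, ∑ j, B i j * B i j)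
        - 2 * ∑ i, ∑ j, A i j * B i j := by
    rw [Finset.mul_sum, ← Finset.sum_add_distrib, ← Finset.sum_sub_distrib]
    refine Finset.sum_congr rfl fun i _ => ?_
    rw [Finset.mul_sum, ← Finset.sum_add_distrib, ← Finset.sum_sub_distrib]
    exact Finset.sum_congr rfl fun j _ => by ring
  have expandL : ∑ i, |a i - b i| ^ 2
      = (∑ i, (a i) ^ 2) + (∑ i, (b i) ^ 2) - 2 * ∑ i, a i * b i := by
    rw [Finset.mul_sum, ← Finset.sum_add_distrib, ← Finset.sum_sub_distrib]
    exact Finset.sum_congr rfl fun i _ => by rw [sq_abs]; ring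
  linarith
end

section
/- Let Σ be a p×p real positive semidefinite matrix. Then trace((Σ² ∘ Σ²)²) ≤ λ₁(Σ⁴) trace(Σ⁴), where ∘ denotes the Hadamard product and λ₁ the largest eigenvalue. -/
open Matrix
open scoped Matrix

lemma diag_le_iSup_eigenvalues {n : ℕ} {A : Matrix (Fin n) (Fin n) ℝ}
    (hA : A.IsHermitian) (i : Fin n) : A i i ≤ ⨆ j, hA.eigenvalues j := by
  set U : Matrix (Fin n) (Fin n) ℝ := (hA.eigenvectorUnitary : Matrix (Fin n) (Fin n) ℝ)
  have hUU : U * star U = 1 := (Matrix.mem_unitaryGroup_iff).mp hA.eigenvectorUnitary.2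
  have hsq : ∑ k, (U i k) ^ 2 = 1 := by
    have := congrArg (fun M => M i i) hUU
    simpa [Matrix.mul_apply, Matrix.one_apply, sq] using this
  have hAii : A i i = ∑ k, hA.eigenvalues k * (U i k) ^ 2 := by
    have := congrArg (fun M => M i i) hA.spectral_theorem
    simp only [Unitary.conjStarAlgAut_apply, Matrix.mul_apply, Matrix.diagonal_apply, Finset.sum_ite_eq,
      Finset.mem_univ, if_true] at this
    simpa [U, Matrix.mul_apply, Matrix.mul_diagonal, sq, mul_comm, mul_left_comm,
      mul_assoc] using this
  rw [hAii]
  calc ∑ k, hA.eigenvalues k * (U i k) ^ 2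
      ≤ ∑ k, (⨆ j, hA.eigenvalues j) * (U i k) ^ 2 := by
        refine Finset.sum_le_sum fun k _ => ?_
        exact mul_le_mul_of_nonneg_right (le_ciSup (Finite.bddAbove_range _) k) (sq_nonneg _)
    _ = ⨆ j, hA.eigenvalues j := by rw [← Finset.mul_sum, hsq, mul_one]

/-- For a real positive semidefinite matrix `Σ`,
`trace((Σ² ⊙ Σ²)²) ≤ λ₁(Σ⁴) trace(Σ⁴)`, where `⊙` is the Hadamard product and `λ₁`
the largest eigenvalue. -/
theorem stmt12 {p : ℕ} (S : Matrix (Fin p) (Fin p) ℝ) (hS : S.PosSemidef) :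
    (((S ^ 2) ⊙ (S ^ 2)) ^ 2).trace
      ≤ (⨆ i, (hS.pow 4).1.eigenvalues i) * (S ^ 4).trace := by
  set B := S ^ 2 with hB
  have hBsymm : ∀ i j, B j i = B i j := by
    intro i j
    have h := (hS.pow 2).1
    have := congrFun (congrFun h j) i
    simpa using this.symm
  have hS4 : S ^ 4 = B * B := by rw [hB, ← pow_add]
  have hdiag : ∀ i, (S ^ 4) i i = ∑ j, (B i j) ^ 2 := by
    intro i
    rw [hS4]
    simp [Matrix.mul_apply, sq]
    exact Finset.sum_congr rfl fun j _ => by rw [hBsymm i j]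
  have htr4 : (S ^ 4).trace = ∑ i, ∑ j, (B i j) ^ 2 := by
    rw [Matrix.trace]
    exact Finset.sum_congr rfl fun i _ => hdiag i
  have htrH : ((B ⊙ B) ^ 2).trace = ∑ i, ∑ j, ((B i j) ^ 2) ^ 2 := by
    rw [sq, Matrix.trace]
    refine Finset.sum_congr rfl fun i _ => ?_
    simp only [Matrix.diag_apply, Matrix.mul_apply, Matrix.hadamard_apply]
    exact Finset.sum_congr rfl fun j _ => by rw [hBsymm i j]; ring
  set μ := ⨆ i, (hS.pow 4).1.eigenvalues i with hμ
  have hkey : ∀ i j, ((B i j) ^ 2) ^ 2 ≤ μ * (B i j) ^ 2 := by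
    intro i j
    have h1 : (B i j) ^ 2 ≤ (S ^ 4) i i := by
      rw [hdiag i]
      exact Finset.single_le_sum (f := fun k => (B i k) ^ 2) (fun k _ => sq_nonneg (B i k)) (Finset.mem_univ j)
    have h2 : (S ^ 4) i i ≤ μ := diag_le_iSup_eigenvalues (hS.pow 4).1 i
    calc ((B i j) ^ 2) ^ 2 = (B i j) ^ 2 * (B i j) ^ 2 := sq _
      _ ≤ μ * (B i j) ^ 2 :=
        mul_le_mul_of_nonneg_right (h1.trans h2) (sq_nonneg _)
  rw [htrH, htr4, Finset.mul_sum]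
  refine Finset.sum_le_sum fun i _ => ?_
  rw [Finset.mul_sum]
  exact Finset.sum_le_sum fun j _ => hkey i j
end
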